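/- Let H be a Hilbert space and T : H → H nonexpansive with at least one fixed point. For a constant κ ∈ (0,1), the Krasnosel'skii–Mann iteration f_{n+1} = (1−κ) f_n + κ T f_n converges weakly to a fixed point of T. -/

import Mathlib

open Filter

set_option linter.unnecessarySimpa false


/-- Any bounded sequence in a real Hilbert space has a weakly convergent subsequence. -/
theorem km_weak_subseq {H : Type*} [NormedAddCommGroup H] [InnerProductSpace ℝ H]
    [CompleteSpace H] (g : ℕ → H) (C : ℝ) (hC : ∀ n, ‖g n‖ ≤ C) :
    ∃ φ : ℕ → ℕ, StrictMono φ ∧ ∃ p : H,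
      ∀ y : H, Tendsto (fun k => (inner ℝ (g (φ k)) y : ℝ)) atTop (nhds (inner ℝ p y)) := by
  -- Step 1: diagonal extraction via seq. compactness of a product of intervals
  set S : Set (ℕ → ℝ) := Set.univ.pi (fun _ => Set.Icc (-(C*C)) (C*C)) with hS
  have hScpt : IsSeqCompact S :=
    (isCompact_univ_pi (fun _ => isCompact_Icc)).isSeqCompact
  have hmem : ∀ n, (fun m => (inner ℝ (g n) (g m) : ℝ)) ∈ S := by
    intro n m _
    have h1 := abs_real_inner_le_norm (g n) (g m)
    have h2 : ‖g n‖ * ‖g m‖ ≤ C * C :=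
      mul_le_mul (hC n) (hC m) (norm_nonneg _) ((norm_nonneg _).trans (hC n))
    constructor
    · nlinarith [abs_nonneg (inner ℝ (g n) (g m) : ℝ), neg_abs_le (inner ℝ (g n) (g m) : ℝ)]
    · nlinarith [le_abs_self (inner ℝ (g n) (g m) : ℝ)]
  obtain ⟨ℓ, -, φ, hφ, hconv⟩ := hScpt hmem
  rw [tendsto_pi_nhds] at hconv
  -- hconv : ∀ m, Tendsto (fun k => inner (g (φ k)) (g m)) atTop (nhds (ℓ m))
  -- Step 2: the set of y for which the inner products converge
  set V : Set H := {y : H | ∃ L : ℝ, Tendsto (fun k => (inner ℝ (g (φ k)) y : ℝ)) atTop (nhds L)}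
    with hV
  have hbase : ∀ m, g m ∈ V := fun m => ⟨ℓ m, hconv m⟩
  have hzero : (0 : H) ∈ V := ⟨0, by simpa using tendsto_const_nhds⟩
  have hadd : ∀ y z, y ∈ V → z ∈ V → y + z ∈ V := by
    rintro y z ⟨Ly, hy⟩ ⟨Lz, hz⟩
    exact ⟨Ly + Lz, by simpa [inner_add_right] using hy.add hz⟩
  have hsmul : ∀ (c : ℝ) y, y ∈ V → c • y ∈ V := by
    rintro c y ⟨Ly, hy⟩
    exact ⟨c * Ly, by simpa [real_inner_smul_right] using hy.const_mul c⟩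
  have hclosed : ∀ y ∈ closure V, y ∈ V := by
    intro y hy
    have hCb : ∀ (z : H) (k : ℕ), |(inner ℝ (g (φ k)) z : ℝ)| ≤ C * ‖z‖ := by
      intro z k
      exact (abs_real_inner_le_norm _ _).trans
        (mul_le_mul_of_nonneg_right (hC _) (norm_nonneg _))
    have hcauchy : CauchySeq (fun k => (inner ℝ (g (φ k)) y : ℝ)) := by
      rw [Metric.cauchySeq_iff]
      intro ε hε
      have hC0 : 0 ≤ C := (norm_nonneg _).trans (hC 0)
      have hpos : 0 < ε / (3 * (C + 1)) := by positivity
      obtain ⟨z, hzV, hzy⟩ := Metric.mem_closure_iff.mp hy _ hpos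
      obtain ⟨Lz, hLz⟩ := hzV
      have hzc : CauchySeq (fun k => (inner ℝ (g (φ k)) z : ℝ)) := hLz.cauchySeq
      rw [Metric.cauchySeq_iff] at hzc
      obtain ⟨N, hN⟩ := hzc (ε / 3) (by linarith)
      refine ⟨N, fun m hm n hn => ?_⟩
      have key : ∀ k, |(inner ℝ (g (φ k)) y : ℝ) - inner ℝ (g (φ k)) z| ≤ ε / 3 := by
        intro k
        have := hCb (y - z) k
        rw [inner_sub_right] at this
        have hd : ‖y - z‖ < ε / (3 * (C + 1)) := by
          rw [← dist_eq_norm]; exact hzy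
        have : |(inner ℝ (g (φ k)) y : ℝ) - inner ℝ (g (φ k)) z| ≤ C * ‖y - z‖ := this
        have h2 : C * ‖y - z‖ ≤ (C + 1) * (ε / (3 * (C + 1))) := by
          have : C * ‖y - z‖ ≤ (C+1) * ‖y - z‖ :=
            mul_le_mul_of_nonneg_right (by linarith) (norm_nonneg _)
          exact this.trans (mul_le_mul_of_nonneg_left hd.le (by linarith))
        have h3 : (C + 1) * (ε / (3 * (C + 1))) = ε / 3 := by
          field_simp
        linarith
      have h1 := key m
      have h2 := key n
      have h3 := hN m hm n hn
      rw [Real.dist_eq] at h3 ⊢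
      have := abs_sub_abs_le_abs_sub ((inner ℝ (g (φ m)) y : ℝ)) ((inner ℝ (g (φ n)) y : ℝ))
      calc |(inner ℝ (g (φ m)) y : ℝ) - inner ℝ (g (φ n)) y|
          ≤ |(inner ℝ (g (φ m)) y : ℝ) - inner ℝ (g (φ m)) z|
            + |(inner ℝ (g (φ m)) z : ℝ) - inner ℝ (g (φ n)) z|
            + |(inner ℝ (g (φ n)) z : ℝ) - inner ℝ (g (φ n)) y| := by
            have := abs_sub_le ((inner ℝ (g (φ m)) y : ℝ)) (inner ℝ (g (φ m)) z) (inner ℝ (g (φ n)) y)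
            have h4 := abs_sub_le ((inner ℝ (g (φ m)) z : ℝ)) (inner ℝ (g (φ n)) z) (inner ℝ (g (φ n)) y)
            linarith
        _ < ε := by
            have h5 : |(inner ℝ (g (φ n)) z : ℝ) - inner ℝ (g (φ n)) y| ≤ ε/3 := by
              rw [abs_sub_comm]; exact key n
            linarith
    obtain ⟨L, hL⟩ := cauchySeq_tendsto_of_complete hcauchy
    exact ⟨L, hL⟩
  -- Step 3: every y is in V, via orthogonal decomposition
  set M : Submodule ℝ H := (Submodule.span ℝ (Set.range g)).topologicalClosure with hM
  have hMclosed : IsClosed (M : Set H) := Submodule.isClosed_topologicalClosure _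
  haveI : CompleteSpace M := hMclosed.completeSpace_coe
  have hspan : ∀ y ∈ Submodule.span ℝ (Set.range g), y ∈ V := by
    intro y hy
    induction hy using Submodule.span_induction with
    | mem x hx => obtain ⟨m, rfl⟩ := hx; exact hbase m
    | zero => exact hzero
    | add a b _ _ ha hb => exact hadd _ _ ha hb
    | smul c a _ ha => exact hsmul c a ha
  have hMV : ∀ y ∈ M, y ∈ V := by
    intro y hy
    apply hclosed
    exact closure_mono (fun z hz => hspan z hz) hy
  have hall : ∀ y : H, y ∈ V := by
    intro y
    have hPy : (Submodule.orthogonalProjection M y : H) ∈ V := hMV _ (Submodule.orthogonalProjection M y).2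
    have hperp : y - (Submodule.orthogonalProjection M y : H) ∈ Mᗮ :=
      Submodule.sub_starProjection_mem_orthogonal (K := M) y
    have hperpV : y - (Submodule.orthogonalProjection M y : H) ∈ V := by
      refine ⟨0, ?_⟩
      have : ∀ k, (inner ℝ (g (φ k)) (y - (Submodule.orthogonalProjection M y : H)) : ℝ) = 0 := by
        intro k
        have hg : g (φ k) ∈ M :=
          Submodule.le_topologicalClosure _ (Submodule.subset_span ⟨φ k, rfl⟩)
        have h0 := (Submodule.mem_orthogonal _ _).mp hperp (g (φ k)) hg
        exact h0
      simp only [this]; exact tendsto_const_nhds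
    have := hadd _ _ hPy hperpV
    simpa using this
  -- Step 4: build the weak limit via Riesz representation
  choose L hL using hall
  have hLadd : ∀ y z, L (y + z) = L y + L z := by
    intro y z
    refine tendsto_nhds_unique ?_ ((hL y).add (hL z))
    simpa [inner_add_right] using hL (y + z)
  have hLsmul : ∀ (c : ℝ) y, L (c • y) = c * L y := by
    intro c y
    refine tendsto_nhds_unique ?_ ((hL y).const_mul c)
    simpa [real_inner_smul_right] using hL (c • y)
  have hLbound : ∀ y, ‖L y‖ ≤ C * ‖y‖ := by
    intro y
    have : Tendsto (fun k => |(inner ℝ (g (φ k)) y : ℝ)|) atTop (nhds |L y|) := (hL y).abs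
    refine le_of_tendsto this (Eventually.of_forall fun k => ?_)
    exact (abs_real_inner_le_norm _ _).trans
      (mul_le_mul_of_nonneg_right (hC _) (norm_nonneg _))
  set lmap : H →ₗ[ℝ] ℝ :=
    { toFun := L, map_add' := hLadd, map_smul' := hLsmul } with hlmap
  set clm : H →L[ℝ] ℝ := lmap.mkContinuous C hLbound with hclm
  refine ⟨φ, hφ, (InnerProductSpace.toDual ℝ H).symm clm, fun y => ?_⟩
  have : (inner ℝ ((InnerProductSpace.toDual ℝ H).symm clm) y : ℝ) = clm y :=
    InnerProductSpace.toDual_symm_apply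
  rw [this]
  exact hL y


theorem km_demiclosed {H : Type*} [NormedAddCommGroup H] [InnerProductSpace ℝ H]
    (T : H → H) (hT : ∀ u v : H, ‖T u - T v‖ ≤ ‖u - v‖)
    (g : ℕ → H) (C : ℝ) (hC : ∀ k, ‖g k‖ ≤ C) (p : H)
    (hreg : Tendsto (fun k => ‖g k - T (g k)‖) atTop (nhds 0))
    (hweak : ∀ y : H, Tendsto (fun k => (inner ℝ (g k) y : ℝ)) atTop (nhds (inner ℝ p y))) :
    T p = p := by
  set c : H := p - T p with hc
  have key : ∀ k, ‖c‖^2 ≤ 2*‖g k - T (g k)‖*(C + ‖p‖) + 2*‖g k - T (g k)‖*‖c‖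
      - 2*((inner ℝ (g k) c : ℝ) - inner ℝ p c) := by
    intro k
    set a : H := T (g k) - g k with ha
    set b : H := g k - p with hb
    have habc : T (g k) - T p = a + b + c := by rw [ha, hb, hc]; abel
    have h1 : ‖a + b + c‖ ≤ ‖b‖ := by rw [← habc]; exact hT _ _
    have e1 : ‖a + b + c‖^2 = ‖a‖^2 + 2*(inner ℝ a b : ℝ) + 2*(inner ℝ a c : ℝ)
        + ‖b‖^2 + 2*(inner ℝ b c : ℝ) + ‖c‖^2 := by
      rw [add_assoc, norm_add_sq_real, inner_add_right, norm_add_sq_real]; ring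
    have h2 : ‖a + b + c‖^2 ≤ ‖b‖^2 := by
      have := pow_le_pow_left₀ (norm_nonneg _) h1 2
      exact this
    have hab : |(inner ℝ a b : ℝ)| ≤ ‖a‖ * ‖b‖ := abs_real_inner_le_norm a b
    have hac : |(inner ℝ a c : ℝ)| ≤ ‖a‖ * ‖c‖ := abs_real_inner_le_norm a c
    have hbc : (inner ℝ b c : ℝ) = (inner ℝ (g k) c : ℝ) - inner ℝ p c := by
      rw [hb, inner_sub_left]
    have hbn : ‖b‖ ≤ C + ‖p‖ := (norm_sub_le _ _).trans (by simp [hC k])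
    have han : ‖a‖ = ‖g k - T (g k)‖ := by rw [ha, ← norm_neg]; congr 1; abel
    rw [← han, ← hbc]
    have habs1 : -(‖a‖*‖b‖) ≤ (inner ℝ a b : ℝ) := neg_le_of_abs_le hab
    have habs2 : -(‖a‖*‖c‖) ≤ (inner ℝ a c : ℝ) := neg_le_of_abs_le hac
    have ha0 : 0 ≤ ‖a‖ := norm_nonneg _
    nlinarith [sq_nonneg ‖a‖, mul_le_mul_of_nonneg_left hbn ha0]
  have hlim : Tendsto (fun k => 2*‖g k - T (g k)‖*(C + ‖p‖) + 2*‖g k - T (g k)‖*‖c‖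
      - 2*((inner ℝ (g k) c : ℝ) - inner ℝ p c)) atTop (nhds 0) := by
    have h1 := (hreg.const_mul 2).mul_const (C + ‖p‖)
    have h2 := (hreg.const_mul 2).mul_const ‖c‖
    have h3 := ((hweak c).sub_const (inner ℝ p c : ℝ)).const_mul 2
    have := (h1.add h2).sub h3
    simpa using this
  have : ‖c‖^2 ≤ 0 := ge_of_tendsto hlim (Eventually.of_forall key)
  have hc0 : c = 0 := by
    have := norm_nonneg c
    have hcn : ‖c‖ = 0 := by nlinarith
    exact norm_eq_zero.mp hcn
  have := sub_eq_zero.mp hc0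
  exact this.symm

/-- Krasnosel'skii–Mann: for a nonexpansive map `T` on a real Hilbert space with a
fixed point and `κ ∈ (0,1)`, the iteration `f_{n+1} = (1−κ) f_n + κ T f_n`
converges weakly to a fixed point of `T`. -/
theorem krasnoselskii_mann_weak_convergence
    {H : Type*} [NormedAddCommGroup H] [InnerProductSpace ℝ H] [CompleteSpace H]
    (T : H → H) (hT : ∀ u v : H, ‖T u - T v‖ ≤ ‖u - v‖)
    (hfix : ∃ p : H, T p = p)
    (κ : ℝ) (hκ0 : 0 < κ) (hκ1 : κ < 1)
    (f : ℕ → H) (hrec : ∀ n, f (n + 1) = (1 - κ) • f n + κ • T (f n)) :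
    ∃ p : H, T p = p ∧
      ∀ y : H, Tendsto (fun n => (inner ℝ (f n) y : ℝ)) atTop (nhds (inner ℝ p y)) := by
  obtain ⟨p₀, hp₀⟩ := hfix
  have hκ0' : (0:ℝ) ≤ κ := hκ0.le
  have hκ1' : (0:ℝ) ≤ 1 - κ := by linarith
  -- decomposition of the step relative to a fixed point
  have hstep : ∀ (q : H), T q = q → ∀ n,
      f (n + 1) - q = (1 - κ) • (f n - q) + κ • (T (f n) - q) := by
    intro q hq n
    rw [hrec n]
    rw [smul_sub, smul_sub]
    have : (1 - κ) • q + κ • q = q := by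
      rw [← add_smul]; simp
    rw [sub_eq_iff_eq_add]
    rw [sub_add_sub_comm, this]
    abel
  -- Fejér monotonicity
  have hdec : ∀ (q : H), T q = q → ∀ n, ‖f (n + 1) - q‖ ≤ ‖f n - q‖ := by
    intro q hq n
    rw [hstep q hq n]
    calc ‖(1 - κ) • (f n - q) + κ • (T (f n) - q)‖
        ≤ ‖(1 - κ) • (f n - q)‖ + ‖κ • (T (f n) - q)‖ := norm_add_le _ _
      _ = (1 - κ) * ‖f n - q‖ + κ * ‖T (f n) - q‖ := by
          rw [norm_smul, norm_smul, Real.norm_eq_abs, Real.norm_eq_abs,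
            abs_of_nonneg hκ1', abs_of_nonneg hκ0']
      _ ≤ (1 - κ) * ‖f n - q‖ + κ * ‖f n - q‖ := by
          have : ‖T (f n) - q‖ ≤ ‖f n - q‖ := by
            conv_lhs => rw [← hq]
            exact hT _ _
          nlinarith
      _ = ‖f n - q‖ := by ring
  have hanti : ∀ (q : H), T q = q → Antitone (fun n => ‖f n - q‖) :=
    fun q hq => antitone_nat_of_succ_le (hdec q hq)
  have hnormlim : ∀ (q : H), T q = q →
      ∃ ℓ : ℝ, Tendsto (fun n => ‖f n - q‖) atTop (nhds ℓ) := by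
    intro q hq
    refine ⟨_, tendsto_atTop_ciInf (hanti q hq) ⟨0, ?_⟩⟩
    rintro x ⟨n, rfl⟩
    positivity
  -- global bound
  set C : ℝ := ‖f 0 - p₀‖ + ‖p₀‖ with hCdef
  have hbound : ∀ n, ‖f n‖ ≤ C := by
    intro n
    have h1 : ‖f n - p₀‖ ≤ ‖f 0 - p₀‖ := hanti p₀ hp₀ (Nat.zero_le n)
    calc ‖f n‖ = ‖f n - p₀ + p₀‖ := by congr 1; abel
      _ ≤ ‖f n - p₀‖ + ‖p₀‖ := norm_add_le _ _
      _ ≤ C := by rw [hCdef]; linarith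
  -- asymptotic regularity
  have hkey : ∀ n, κ * (1 - κ) * ‖f n - T (f n)‖^2
      ≤ ‖f n - p₀‖^2 - ‖f (n+1) - p₀‖^2 := by
    intro n
    set a : H := f n - p₀ with ha
    set b : H := T (f n) - p₀ with hb
    have hnb : ‖b‖ ≤ ‖a‖ := by
      rw [hb, ha]; conv_lhs => rw [← hp₀]
      exact hT _ _
    have hab : f n - T (f n) = a - b := by rw [ha, hb]; abel
    have e1 : ‖f (n+1) - p₀‖^2 = (1-κ)^2*‖a‖^2 + 2*(1-κ)*κ*(inner ℝ a b : ℝ) + κ^2*‖b‖^2 := by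
      rw [hstep p₀ hp₀ n, ← ha, ← hb, norm_add_sq_real, norm_smul, norm_smul,
        real_inner_smul_left, real_inner_smul_right, Real.norm_eq_abs, Real.norm_eq_abs,
        abs_of_nonneg hκ1', abs_of_nonneg hκ0']
      ring
    have e2 : ‖a - b‖^2 = ‖a‖^2 - 2*(inner ℝ a b : ℝ) + ‖b‖^2 := norm_sub_sq_real a b
    rw [hab, e1, e2]
    nlinarith [sq_nonneg ‖a‖, sq_nonneg ‖b‖, norm_nonneg a, norm_nonneg b,
      pow_le_pow_left₀ (norm_nonneg b) hnb 2]
  obtain ⟨ℓ₀, hℓ₀⟩ := hnormlim p₀ hp₀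
  have hsq : Tendsto (fun n => ‖f n - p₀‖^2) atTop (nhds (ℓ₀^2)) := hℓ₀.pow 2
  have hsq' : Tendsto (fun n => ‖f (n+1) - p₀‖^2) atTop (nhds (ℓ₀^2)) :=
    hsq.comp (tendsto_add_atTop_nat 1)
  have hdiff : Tendsto (fun n => ‖f n - p₀‖^2 - ‖f (n+1) - p₀‖^2) atTop (nhds 0) := by
    have := hsq.sub hsq'
    simpa using this
  have hreg2 : Tendsto (fun n => κ * (1 - κ) * ‖f n - T (f n)‖^2) atTop (nhds 0) := by
    refine tendsto_of_tendsto_of_tendsto_of_le_of_le tendsto_const_nhds hdiff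
      (fun n => by positivity) hkey
  have hreg3 : Tendsto (fun n => ‖f n - T (f n)‖^2) atTop (nhds 0) := by
    have hne : κ * (1 - κ) ≠ 0 := (mul_pos hκ0 (by linarith : (0:ℝ) < 1 - κ)).ne'
    have := hreg2.const_mul (κ * (1-κ))⁻¹
    simp only [← mul_assoc, inv_mul_cancel₀ hne, one_mul, mul_zero] at this
    exact this
  have hreg : Tendsto (fun n => ‖f n - T (f n)‖) atTop (nhds 0) := by
    have h1 : Tendsto (fun n => Real.sqrt (‖f n - T (f n)‖^2)) atTop (nhds (Real.sqrt 0)) :=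
      (Real.continuous_sqrt.tendsto 0).comp hreg3
    rw [Real.sqrt_zero] at h1
    refine h1.congr fun n => Real.sqrt_sq (norm_nonneg _)
  -- extract weakly convergent subsequence; its limit is a fixed point
  obtain ⟨φ, hφ, p, hweakp⟩ := km_weak_subseq f C hbound
  have hTp : T p = p := by
    refine km_demiclosed T hT (fun k => f (φ k)) C (fun k => hbound _) p ?_ hweakp
    exact hreg.comp hφ.tendsto_atTop
  refine ⟨p, hTp, fun y => ?_⟩
  by_contra hnot
  rw [Metric.tendsto_atTop] at hnot
  push_neg at hnot
  obtain ⟨ε, hε, hfreq⟩ := hnot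
  have hfreq' : ∃ᶠ n in atTop, ε ≤ dist (inner ℝ (f n) y : ℝ) (inner ℝ p y) :=
    frequently_atTop.mpr hfreq
  obtain ⟨ψ, hψ, hψd⟩ := extraction_of_frequently_atTop hfreq'
  obtain ⟨ψ', hψ', q, hweakq⟩ := km_weak_subseq (fun j => f (ψ j)) C (fun j => hbound _)
  have hTq : T q = q := by
    refine km_demiclosed T hT (fun k => f (ψ (ψ' k))) C (fun k => hbound _) q ?_ hweakq
    exact hreg.comp ((hψ.comp hψ').tendsto_atTop)
  -- the scalar sequence ⟪f n, q - p⟫ converges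
  obtain ⟨ℓp, hℓp⟩ := hnormlim p hTp
  obtain ⟨ℓq, hℓq⟩ := hnormlim q hTq
  have hinner : ∀ n : ℕ, (inner ℝ (f n) (q - p) : ℝ)
      = (‖f n - p‖^2 - ‖f n - q‖^2 - ‖p‖^2 + ‖q‖^2)/2 := by
    intro n
    have e1 : ‖f n - p‖^2 = ‖f n‖^2 - 2*(inner ℝ (f n) p : ℝ) + ‖p‖^2 := norm_sub_sq_real _ _
    have e2 : ‖f n - q‖^2 = ‖f n‖^2 - 2*(inner ℝ (f n) q : ℝ) + ‖q‖^2 := norm_sub_sq_real _ _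
    rw [inner_sub_right, e1, e2]
    ring
  have hc : Tendsto (fun n => (inner ℝ (f n) (q - p) : ℝ)) atTop
      (nhds ((ℓp^2 - ℓq^2 - ‖p‖^2 + ‖q‖^2)/2)) := by
    have := (((((hℓp.pow 2).sub (hℓq.pow 2)).sub_const (‖p‖^2)).add_const (‖q‖^2)).div_const 2)
    refine Tendsto.congr (fun n => (hinner n).symm) this
  have hlim1 : (inner ℝ p (q - p) : ℝ) = (ℓp^2 - ℓq^2 - ‖p‖^2 + ‖q‖^2)/2 := by
    refine tendsto_nhds_unique (hweakp (q - p)) (hc.comp hφ.tendsto_atTop)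
  have hlim2 : (inner ℝ q (q - p) : ℝ) = (ℓp^2 - ℓq^2 - ‖p‖^2 + ‖q‖^2)/2 := by
    refine tendsto_nhds_unique (hweakq (q - p)) (hc.comp (hψ.comp hψ').tendsto_atTop)
  have hqp : q = p := by
    have h0 : (inner ℝ (q - p) (q - p) : ℝ) = 0 := by
      rw [inner_sub_left, hlim1, hlim2]; ring
    have := inner_self_eq_zero.mp h0
    exact sub_eq_zero.mp this
  -- contradiction with the ε-separation along ψ
  have hdist : Tendsto (fun k => dist (inner ℝ (f (ψ (ψ' k))) y : ℝ) (inner ℝ p y)) atTop (nhds 0) := by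
    have := (hweakq y).sub_const (inner ℝ p y : ℝ)
    rw [hqp, sub_self] at this
    have habs := this.abs
    rw [abs_zero] at habs
    refine habs.congr fun k => ?_
    rw [Real.dist_eq]
  have : ε ≤ 0 := ge_of_tendsto hdist (Eventually.of_forall fun k => hψd (ψ' k))
  linarith
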